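/- arXiv:2505.04910 — 2 statements merged into one kernel-verified Lean document; each statement's English description precedes it below -/
import Mathlib

section
/- Let c : E' × E → ℂ be a matrix such that: (i) c(e',e) = 0 whenever w'(e') ≠ w(e); (ii) there is a constant K such that for every e' ∈ E' the set {e ∈ E : c(e',e) ≠ 0} has at most K elements; (iii) sup_{e',e} |c(e',e)| < ∞. Then Φ_c, defined by (Φ_c φ)_{e'} = ∑_{e∈E} c(e',e)·φ_e, is a well-defined continuous linear map 𝒮(E,V) → 𝒮(E',V). If moreover c' : E × E' → ℂ also satisfies (i)–(iii) (with the roles of (E,w) and (E',w') exchanged) and c and c' are mutually inverse matrices (∑_{e''∈E} c(e',e'')·c'(e'',f') = δ_{e',f'} for all e',f' ∈ E', and ∑_{e''∈E'} c'(e,e'')·c(e'',f) = δ_{e,f} for all e,f ∈ E), then Φ_c is an isomorphism of topological vector spaces with inverse Φ_{c'}. (Abstract form of the change-of-basis Lemma of §5.5.3 of the paper, which shows 𝔉_el(G) ≅ 𝔉_el^st(G) ⊕ 𝔉_el^unst(G) using that the change-of-basis matrices between Arthur's basis and the stable/unstable basis have boundedly many nonzero entries per column, bounded entries, and connect only elements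 with the same infinitesimal-character norm.) -/
/-!
# Statement 12

Abstract change-of-basis lemma for family Schwartz spaces.  Let `V` be a
finite-dimensional real inner product space (modelled as `EuclideanSpace ℝ (Fin n)`)
and `(E,w)`, `(E',w')` countable weighted sets.  If a matrix `c : E' × E → ℂ` connects
only indices of equal weight, has boundedly many nonzero entries in each row, and has
bounded entries, then `(Φ_c φ)_{e'} = ∑_e c(e',e) φ_e` defines a continuous linear map
`𝒮(E,V) → 𝒮(E',V)`; and if `c' : E × E' → ℂ` satisfies the same conditions and `c`,
`c'` are mutually inverse matrices, then `Φ_c` is an isomorphism of topological vector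
spaces with inverse `Φ_{c'}`.
-/

noncomputable section

open scoped BigOperators NNReal ENNReal
open Complex MeasureTheory

namespace PaperStableTransfer

/-- Model of a finite-dimensional real inner product space. -/
abbrev V (n : ℕ) : Type := EuclideanSpace ℝ (Fin n)

/-- The smoothness exponent `∞` (i.e. `C^∞`). -/
abbrev sm : WithTop ℕ∞ := (⊤ : ℕ∞)

variable {n : ℕ}

/-- Partial derivative in the `j`-th coordinate direction. -/
def pd (j : Fin n) (f : V n → ℂ) : V n → ℂ :=
  fun x => fderiv ℝ f x (EuclideanSpace.single j (1 : ℝ))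

/-- Iterated partial derivative along a list of coordinate directions.  These monomial
operators (together with their finite linear combinations) exhaust the
constant-coefficient differential operators on `V n`, so quantifying seminorm
conditions over all `D : List (Fin n)` is equivalent to quantifying over all
constant-coefficient differential operators. -/
def mderiv : List (Fin n) → (V n → ℂ) → V n → ℂ
  | [] => fun f => f
  | j :: D => fun f => pd j (mderiv D f)

lemma contDiff_mderiv {f : V n → ℂ} (hf : ContDiff ℝ sm f) (D : List (Fin n)) :
    ContDiff ℝ sm (mderiv D f) := by
  induction D with
  | nil => exact hf
  | cons j D ih =>
      exact (ih.fderiv_right (m := sm) (by simp)).clm_apply contDiff_const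

lemma mderiv_zero (D : List (Fin n)) : mderiv D (0 : V n → ℂ) = 0 := by
  induction D with
  | nil => rfl
  | cons j D ih =>
      show pd j (mderiv D (0 : V n → ℂ)) = 0
      rw [ih]
      funext x
      show fderiv ℝ (fun _ : V n => (0 : ℂ)) x (EuclideanSpace.single j (1:ℝ)) = 0
      rw [fderiv_const_apply]
      rfl

lemma mderiv_add {f g : V n → ℂ} (hf : ContDiff ℝ sm f) (hg : ContDiff ℝ sm g)
    (D : List (Fin n)) : mderiv D (f + g) = mderiv D f + mderiv D g := by
  induction D with
  | nil => rfl
  | cons j D ih =>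
      show pd j (mderiv D (f + g)) = pd j (mderiv D f) + pd j (mderiv D g)
      rw [ih]
      funext x
      have h1 : DifferentiableAt ℝ (mderiv D f) x :=
        ((contDiff_mderiv hf D).differentiable (by simp)).differentiableAt
      have h2 : DifferentiableAt ℝ (mderiv D g) x :=
        ((contDiff_mderiv hg D).differentiable (by simp)).differentiableAt
      show fderiv ℝ (fun y => mderiv D f y + mderiv D g y) x (EuclideanSpace.single j (1:ℝ)) = _
      rw [fderiv_fun_add h1 h2]
      rfl

lemma mderiv_smul (c : ℂ) {f : V n → ℂ} (hf : ContDiff ℝ sm f) (D : List (Fin n)) :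
    mderiv D (c • f) = c • mderiv D f := by
  induction D with
  | nil => rfl
  | cons j D ih =>
      show pd j (mderiv D (c • f)) = c • pd j (mderiv D f)
      rw [ih]
      funext x
      have h1 : DifferentiableAt ℝ (mderiv D f) x :=
        ((contDiff_mderiv hf D).differentiable (by simp)).differentiableAt
      show fderiv ℝ (fun y => c • mderiv D f y) x (EuclideanSpace.single j (1:ℝ)) = _
      rw [fderiv_fun_const_smul h1 c]
      rfl

variable (n) in
/-- Membership predicate for the family Schwartz space `𝒮(E,V)`: all components are
smooth and every constant-coefficient derivative decays, uniformly in `e ∈ E`, faster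
than any power of `(1 + w e + ‖x‖)`. -/
def IsSchwartzFam (E : Type) (w : E → ℝ≥0) (φ : E → V n → ℂ) : Prop :=
  (∀ e, ContDiff ℝ sm (φ e)) ∧
    ∀ (D : List (Fin n)) (N : ℕ), ∃ C : ℝ, ∀ (e : E) (x : V n),
      ‖mderiv D (φ e) x‖ * (1 + (w e : ℝ) + ‖x‖) ^ N ≤ C

variable (n) in
/-- The family Schwartz space `𝒮(E,V)` as a complex vector space. -/
def SchwartzFam (E : Type) (w : E → ℝ≥0) : Submodule ℂ (E → V n → ℂ) where
  carrier := {φ | IsSchwartzFam n E w φ}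
  zero_mem' := by
    refine ⟨fun e => contDiff_const, fun D N => ⟨0, fun e x => ?_⟩⟩
    have h0 : mderiv D ((0 : E → V n → ℂ) e) = 0 := mderiv_zero D
    rw [h0]
    simp
  add_mem' := by
    rintro φ ψ ⟨hφs, hφb⟩ ⟨hψs, hψb⟩
    refine ⟨fun e => (hφs e).add (hψs e), fun D N => ?_⟩
    obtain ⟨C₁, h₁⟩ := hφb D N
    obtain ⟨C₂, h₂⟩ := hψb D N
    refine ⟨C₁ + C₂, fun e x => ?_⟩
    have hadd : mderiv D ((φ + ψ) e) = mderiv D (φ e) + mderiv D (ψ e) :=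
      mderiv_add (hφs e) (hψs e) D
    have ht : (0:ℝ) ≤ (1 + (w e : ℝ) + ‖x‖) ^ N := by positivity
    calc ‖mderiv D ((φ + ψ) e) x‖ * (1 + (w e : ℝ) + ‖x‖) ^ N
        ≤ (‖mderiv D (φ e) x‖ + ‖mderiv D (ψ e) x‖) * (1 + (w e : ℝ) + ‖x‖) ^ N := by
          rw [hadd]
          exact mul_le_mul_of_nonneg_right (norm_add_le _ _) ht
      _ = ‖mderiv D (φ e) x‖ * (1 + (w e : ℝ) + ‖x‖) ^ N
            + ‖mderiv D (ψ e) x‖ * (1 + (w e : ℝ) + ‖x‖) ^ N := add_mul _ _ _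
      _ ≤ C₁ + C₂ := add_le_add (h₁ e x) (h₂ e x)
  smul_mem' := by
    rintro c φ ⟨hφs, hφb⟩
    refine ⟨fun e => (hφs e).const_smul c, fun D N => ?_⟩
    obtain ⟨C, hC⟩ := hφb D N
    refine ⟨‖c‖ * C, fun e x => ?_⟩
    have hsmul : mderiv D ((c • φ) e) = c • mderiv D (φ e) :=
      mderiv_smul c (hφs e) D
    calc ‖mderiv D ((c • φ) e) x‖ * (1 + (w e : ℝ) + ‖x‖) ^ N
        = ‖c‖ * (‖mderiv D (φ e) x‖ * (1 + (w e : ℝ) + ‖x‖) ^ N) := by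
          rw [hsmul]
          show ‖c • mderiv D (φ e) x‖ * _ = _
          rw [norm_smul, mul_assoc]
      _ ≤ ‖c‖ * C := mul_le_mul_of_nonneg_left (hC e x) (norm_nonneg c)

variable (n) in
/-- The linear embedding of `𝒮(E,V)` into a product of `ℓ^∞`-spaces recording all the
defining seminorms `‖φ‖_{D,N}`; the Fréchet topology of `𝒮(E,V)` defined by those
seminorms is the topology induced by this embedding. -/
def schwartzToLp {E : Type} {w : E → ℝ≥0} (φ : SchwartzFam n E w)
    (i : List (Fin n) × ℕ) : lp (fun _ : E × V n => ℂ) ∞ :=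
  ⟨fun p => mderiv i.1 ((φ : E → V n → ℂ) p.1) p.2
      * (((1 + (w p.1 : ℝ) + ‖p.2‖) ^ i.2 : ℝ) : ℂ), by
    obtain ⟨C, hC⟩ := φ.2.2 i.1 i.2
    apply memℓp_infty
    refine ⟨C, ?_⟩
    rintro y ⟨p, rfl⟩
    have hnn : (0:ℝ) ≤ (1 + (w p.1 : ℝ) + ‖p.2‖) ^ i.2 := by positivity
    calc ‖mderiv i.1 ((φ : E → V n → ℂ) p.1) p.2
          * (((1 + (w p.1 : ℝ) + ‖p.2‖) ^ i.2 : ℝ) : ℂ)‖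
        = ‖mderiv i.1 ((φ : E → V n → ℂ) p.1) p.2‖ * (1 + (w p.1 : ℝ) + ‖p.2‖) ^ i.2 := by
          rw [norm_mul, Complex.norm_real, Real.norm_eq_abs, _root_.abs_of_nonneg hnn]
      _ ≤ C := hC p.1 p.2⟩

/-- The Fréchet space topology on `𝒮(E,V)` defined by the seminorms `‖·‖_{D,N}`. -/
instance schwartzFamTopology (E : Type) (w : E → ℝ≥0) :
    TopologicalSpace (SchwartzFam n E w) :=
  TopologicalSpace.induced (fun φ => schwartzToLp n φ) inferInstance


section Auxiliary

variable {n : ℕ}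

lemma contDiff_finset_csum {ι : Type*} (s : Finset ι) (c : ι → ℂ) (φ : ι → V n → ℂ)
    (hφ : ∀ i, ContDiff ℝ sm (φ i)) :
    ContDiff ℝ sm (∑ i ∈ s, c i • φ i) := by
  classical
  induction s using Finset.induction with
  | empty => rw [Finset.sum_empty]; exact contDiff_const
  | insert _ _ ha ih =>
      rw [Finset.sum_insert ha]
      exact ((hφ _).const_smul (c _)).add ih

lemma mderiv_finset_csum {ι : Type*} (s : Finset ι) (c : ι → ℂ) (φ : ι → V n → ℂ)
    (hφ : ∀ i, ContDiff ℝ sm (φ i)) (D : List (Fin n)) :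
    mderiv D (∑ i ∈ s, c i • φ i) = ∑ i ∈ s, c i • mderiv D (φ i) := by
  classical
  induction s using Finset.induction with
  | empty => simpa using mderiv_zero D
  | @insert a t ha ih =>
      rw [Finset.sum_insert ha, Finset.sum_insert ha,
        mderiv_add (f := c a • φ a) (g := ∑ i ∈ t, c i • φ i)
          ((hφ a).const_smul (c a)) (contDiff_finset_csum t c φ hφ),
        mderiv_smul (c a) (hφ a), ih]

/-- The change-of-basis matrix `c` induces a continuous linear map between family
Schwartz spaces. -/
lemma exists_changeOfBasis_CLM (n : ℕ) {E E' : Type} (w : E → ℝ≥0) (w' : E' → ℝ≥0)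
    (c : E' → E → ℂ)
    (hzero : ∀ (e' : E') (e : E), c e' e ≠ 0 → w' e' = w e)
    (hrow : ∃ K : ℕ, ∀ e' : E', ∃ s : Finset E, {e : E | c e' e ≠ 0} ⊆ ↑s ∧ s.card ≤ K)
    (hbdd : ∃ B : ℝ, ∀ (e' : E') (e : E), ‖c e' e‖ ≤ B) :
    ∃ T : SchwartzFam n E w →L[ℂ] SchwartzFam n E' w',
      ∀ (φ : SchwartzFam n E w) (e' : E') (x : V n),
        ((T φ : SchwartzFam n E' w') : E' → V n → ℂ) e' x
          = ∑ᶠ e : E, c e' e * (φ : E → V n → ℂ) e x := by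
  classical
  obtain ⟨K, hK⟩ := hrow
  choose s hs₁ hs₂ using hK
  obtain ⟨B₀, hB₀⟩ := hbdd
  set B : ℝ := max B₀ 0 with hBdef
  have hB : ∀ e' e, ‖c e' e‖ ≤ B := fun e' e => (hB₀ e' e).trans (le_max_left _ _)
  have hB0 : (0:ℝ) ≤ B := le_max_right _ _
  have hsupp : ∀ (φ : E → V n → ℂ) (e' : E') (x : V n),
      (Function.support fun e => c e' e * φ e x) ⊆ ↑(s e') := by
    intro φ e' x e he
    exact hs₁ e' (left_ne_zero_of_mul he)
  -- membership of the image family in the Schwartz space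
  have hmem : ∀ φ : SchwartzFam n E w,
      IsSchwartzFam n E' w' (fun e' => ∑ e ∈ s e', c e' e • (φ : E → V n → ℂ) e) := by
    intro φ
    have hφ : IsSchwartzFam n E w (φ : E → V n → ℂ) := φ.2
    refine ⟨fun e' => contDiff_finset_csum _ _ _ (fun e => hφ.1 e), fun D N => ?_⟩
    obtain ⟨C₀, hC₀⟩ := hφ.2 D N
    set C : ℝ := max C₀ 0 with hCdef
    have hC : ∀ e x, ‖mderiv D ((φ : E → V n → ℂ) e) x‖ * (1 + (w e : ℝ) + ‖x‖) ^ N ≤ C :=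
      fun e x => (hC₀ e x).trans (le_max_left _ _)
    have hC0 : (0:ℝ) ≤ C := le_max_right _ _
    refine ⟨(K : ℝ) * (B * C), fun e' x => ?_⟩
    rw [mderiv_finset_csum _ _ _ (fun e => hφ.1 e) D]
    have hWnn : (0:ℝ) ≤ (1 + (w' e' : ℝ) + ‖x‖) ^ N := by positivity
    have hterm : ∀ e ∈ s e',
        ‖(c e' e • mderiv D ((φ : E → V n → ℂ) e)) x‖ * (1 + (w' e' : ℝ) + ‖x‖) ^ N
          ≤ B * C := by
      intro e _
      by_cases hce : c e' e = 0
      · simp [hce, mul_nonneg hB0 hC0]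
      · have hw : w' e' = w e := hzero e' e hce
        have : ‖(c e' e • mderiv D ((φ : E → V n → ℂ) e)) x‖
            = ‖c e' e‖ * ‖mderiv D ((φ : E → V n → ℂ) e) x‖ := by
          show ‖c e' e • mderiv D ((φ : E → V n → ℂ) e) x‖ = _
          rw [norm_smul]
        rw [this, hw, mul_assoc]
        exact mul_le_mul (hB e' e) (hC e x) (by positivity) hB0
    calc ‖(∑ e ∈ s e', c e' e • mderiv D ((φ : E → V n → ℂ) e)) x‖
            * (1 + (w' e' : ℝ) + ‖x‖) ^ N
        = ‖∑ e ∈ s e', (c e' e • mderiv D ((φ : E → V n → ℂ) e)) x‖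
            * (1 + (w' e' : ℝ) + ‖x‖) ^ N := by rw [Finset.sum_apply]
      _ ≤ (∑ e ∈ s e', ‖(c e' e • mderiv D ((φ : E → V n → ℂ) e)) x‖)
            * (1 + (w' e' : ℝ) + ‖x‖) ^ N :=
          mul_le_mul_of_nonneg_right (norm_sum_le _ _) hWnn
      _ = ∑ e ∈ s e', ‖(c e' e • mderiv D ((φ : E → V n → ℂ) e)) x‖
            * (1 + (w' e' : ℝ) + ‖x‖) ^ N := Finset.sum_mul _ _ _
      _ ≤ (s e').card • (B * C) := Finset.sum_le_card_nsmul _ _ _ hterm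
      _ = ((s e').card : ℝ) * (B * C) := nsmul_eq_mul _ _
      _ ≤ (K : ℝ) * (B * C) := by
          exact mul_le_mul_of_nonneg_right (by exact_mod_cast hs₂ e')
            (mul_nonneg hB0 hC0)
  -- the underlying linear map
  let L : SchwartzFam n E w →ₗ[ℂ] SchwartzFam n E' w' :=
    { toFun := fun φ => ⟨fun e' => ∑ e ∈ s e', c e' e • (φ : E → V n → ℂ) e, hmem φ⟩
      map_add' := by
        intro φ ψ
        apply Subtype.ext
        funext e'
        show ∑ e ∈ s e', c e' e • ((φ : E → V n → ℂ) + (ψ : E → V n → ℂ)) e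
            = (∑ e ∈ s e', c e' e • (φ : E → V n → ℂ) e)
              + ∑ e ∈ s e', c e' e • (ψ : E → V n → ℂ) e
        rw [← Finset.sum_add_distrib]
        exact Finset.sum_congr rfl fun e _ => by
          show c e' e • ((φ : E → V n → ℂ) e + (ψ : E → V n → ℂ) e) = _
          rw [smul_add]
      map_smul' := by
        intro a φ
        apply Subtype.ext
        funext e'
        show ∑ e ∈ s e', c e' e • (a • (φ : E → V n → ℂ)) e
            = a • ∑ e ∈ s e', c e' e • (φ : E → V n → ℂ) e
        rw [Finset.smul_sum]
        exact Finset.sum_congr rfl fun e _ => by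
          show c e' e • (a • (φ : E → V n → ℂ) e) = a • (c e' e • (φ : E → V n → ℂ) e)
          rw [smul_comm] }
  -- the lp-multiplier bound
  have hbound : ∀ (f : lp (fun _ : E × V n => ℂ) ∞) (p : E' × V n),
      ‖∑ e ∈ s p.1, c p.1 e * f (e, p.2)‖ ≤ (K : ℝ) * B * ‖f‖ := by
    intro f p
    calc ‖∑ e ∈ s p.1, c p.1 e * f (e, p.2)‖
        ≤ ∑ e ∈ s p.1, ‖c p.1 e * f (e, p.2)‖ := norm_sum_le _ _
      _ ≤ (s p.1).card • (B * ‖f‖) := by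
          refine Finset.sum_le_card_nsmul _ _ _ fun e _ => ?_
          rw [norm_mul]
          exact mul_le_mul (hB _ _)
            (lp.norm_apply_le_norm ENNReal.top_ne_zero f (e, p.2)) (norm_nonneg _) hB0
      _ = ((s p.1).card : ℝ) * (B * ‖f‖) := nsmul_eq_mul _ _
      _ ≤ (K : ℝ) * (B * ‖f‖) :=
          mul_le_mul_of_nonneg_right (by exact_mod_cast hs₂ p.1)
            (mul_nonneg hB0 (norm_nonneg f))
      _ = (K : ℝ) * B * ‖f‖ := by ring
  have hM : ∀ f : lp (fun _ : E × V n => ℂ) ∞,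
      Memℓp (fun p : E' × V n => ∑ e ∈ s p.1, c p.1 e * f (e, p.2)) ∞ := by
    intro f
    apply memℓp_infty
    refine ⟨(K : ℝ) * B * ‖f‖, ?_⟩
    rintro y ⟨p, rfl⟩
    exact hbound f p
  let M : lp (fun _ : E × V n => ℂ) ∞ → lp (fun _ : E' × V n => ℂ) ∞ :=
    fun f => ⟨fun p => ∑ e ∈ s p.1, c p.1 e * f (e, p.2), hM f⟩
  have hMlip : LipschitzWith ((K : ℝ≥0) * B.toNNReal) M := by
    refine LipschitzWith.of_dist_le_mul fun f g => ?_
    rw [dist_eq_norm, dist_eq_norm]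
    have hKB : ((((K : ℝ≥0) * B.toNNReal) : ℝ≥0) : ℝ) = (K : ℝ) * B := by
      push_cast
      rw [Real.coe_toNNReal _ hB0]
    rw [hKB]
    refine lp.norm_le_of_forall_le (mul_nonneg (by positivity) (norm_nonneg _)) fun p => ?_
    have hcoe : (M f - M g) p = M f p - M g p := by
      rw [lp.coeFn_sub]; rfl
    have : (M f - M g) p = ∑ e ∈ s p.1, c p.1 e * (f - g) (e, p.2) := by
      rw [hcoe]
      show (∑ e ∈ s p.1, c p.1 e * f (e, p.2)) - ∑ e ∈ s p.1, c p.1 e * g (e, p.2) = _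
      rw [← Finset.sum_sub_distrib]
      refine Finset.sum_congr rfl fun e _ => ?_
      rw [lp.coeFn_sub]
      show c p.1 e * f (e, p.2) - c p.1 e * g (e, p.2) = c p.1 e * (f (e, p.2) - g (e, p.2))
      ring
    rw [this]
    exact hbound (f - g) p
  -- continuity of L
  have hLcont : Continuous L := by
    refine continuous_induced_rng.2 ?_
    refine continuous_pi fun i => ?_
    show Continuous fun φ : SchwartzFam n E w => schwartzToLp n (L φ) i
    have key : (fun φ : SchwartzFam n E w => schwartzToLp n (L φ) i)
        = M ∘ (fun φ => schwartzToLp n φ i) := by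
      funext φ
      apply Subtype.ext
      funext p
      have hφ : IsSchwartzFam n E w (φ : E → V n → ℂ) := φ.2
      have hL : ((L φ : SchwartzFam n E' w') : E' → V n → ℂ) p.1
          = ∑ e ∈ s p.1, c p.1 e • (φ : E → V n → ℂ) e := rfl
      show mderiv i.1 (((L φ : SchwartzFam n E' w') : E' → V n → ℂ) p.1) p.2
            * (((1 + (w' p.1 : ℝ) + ‖p.2‖) ^ i.2 : ℝ) : ℂ)
          = ∑ e ∈ s p.1, c p.1 e * (mderiv i.1 ((φ : E → V n → ℂ) e) p.2
            * (((1 + (w e : ℝ) + ‖p.2‖) ^ i.2 : ℝ) : ℂ))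
      rw [hL, mderiv_finset_csum _ _ _ (fun e => hφ.1 e), Finset.sum_apply,
        Finset.sum_mul]
      refine Finset.sum_congr rfl fun e _ => ?_
      by_cases hce : c p.1 e = 0
      · simp [hce]
      · rw [hzero p.1 e hce]
        simp only [Pi.smul_apply, smul_eq_mul]
        ring
    rw [key]
    have h0 : Continuous fun φ : SchwartzFam n E w => schwartzToLp n φ :=
      continuous_induced_dom
    exact hMlip.continuous.comp ((continuous_apply i).comp h0)
  refine ⟨⟨L, hLcont⟩, fun φ e' x => ?_⟩
  have h1 : ((⟨L, hLcont⟩ : SchwartzFam n E w →L[ℂ] SchwartzFam n E' w') φ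
      : E' → V n → ℂ) e' x = ∑ e ∈ s e', c e' e * (φ : E → V n → ℂ) e x := by
    show (∑ e ∈ s e', c e' e • (φ : E → V n → ℂ) e) x = _
    rw [Finset.sum_apply]
    rfl
  rw [h1, ← finsum_eq_finset_sum_of_support_subset _ (hsupp (φ : E → V n → ℂ) e' x)]

/-- Inverse matrices give inverse maps: the key finite-support computation. -/
lemma key_inverse {E E' : Type} (c : E' → E → ℂ) (c' : E → E' → ℂ)
    (s : E' → Finset E) (s' : E → Finset E')
    (hs : ∀ e', {e : E | c e' e ≠ 0} ⊆ ↑(s e'))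
    (hs' : ∀ e, {e' : E' | c' e e' ≠ 0} ⊆ ↑(s' e))
    (hinv : ∀ e f : E, (e = f → ∑ᶠ e'' : E', c' e e'' * c e'' f = 1)
      ∧ (e ≠ f → ∑ᶠ e'' : E', c' e e'' * c e'' f = 0))
    (g : E → ℂ) (e : E) :
    ∑ᶠ e'' : E', c' e e'' * ∑ᶠ f : E, c e'' f * g f = g e := by
  classical
  set F : Finset E := (s' e).biUnion s with hF
  have hδ : ∀ f, ∑ᶠ e'' : E', c' e e'' * c e'' f = ∑ e'' ∈ s' e, c' e e'' * c e'' f :=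
    fun f => finsum_eq_finset_sum_of_support_subset _
      (fun e'' h => hs' e (left_ne_zero_of_mul h))
  have houter : ∑ᶠ e'' : E', c' e e'' * ∑ᶠ f : E, c e'' f * g f
      = ∑ e'' ∈ s' e, c' e e'' * ∑ᶠ f : E, c e'' f * g f :=
    finsum_eq_finset_sum_of_support_subset _
      (fun e'' h => hs' e (left_ne_zero_of_mul h))
  have hinner : ∀ e'' ∈ s' e, (∑ᶠ f : E, c e'' f * g f) = ∑ f ∈ F, c e'' f * g f := by
    intro e'' he''
    refine finsum_eq_finset_sum_of_support_subset _ ?_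
    intro f hf
    exact Finset.mem_coe.2 (Finset.mem_biUnion.2 ⟨e'', he'', hs e'' (left_ne_zero_of_mul hf)⟩)
  have heF : e ∈ F := by
    by_contra he
    have h1 : ∑ᶠ e'' : E', c' e e'' * c e'' e = 1 := (hinv e e).1 rfl
    rw [hδ] at h1
    have h0 : ∑ e'' ∈ s' e, c' e e'' * c e'' e = 0 := by
      refine Finset.sum_eq_zero fun e'' he'' => ?_
      have : c e'' e = 0 := by
        by_contra hne
        exact he (Finset.mem_biUnion.2 ⟨e'', he'', hs e'' hne⟩)
      rw [this, mul_zero]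
    rw [h0] at h1
    exact one_ne_zero h1.symm
  calc ∑ᶠ e'' : E', c' e e'' * ∑ᶠ f : E, c e'' f * g f
      = ∑ e'' ∈ s' e, c' e e'' * ∑ f ∈ F, c e'' f * g f := by
        rw [houter]
        exact Finset.sum_congr rfl fun e'' he'' => by rw [hinner e'' he'']
    _ = ∑ e'' ∈ s' e, ∑ f ∈ F, c' e e'' * (c e'' f * g f) := by
        exact Finset.sum_congr rfl fun e'' _ => Finset.mul_sum _ _ _
    _ = ∑ f ∈ F, ∑ e'' ∈ s' e, c' e e'' * (c e'' f * g f) := Finset.sum_comm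
    _ = ∑ f ∈ F, (∑ e'' ∈ s' e, c' e e'' * c e'' f) * g f := by
        refine Finset.sum_congr rfl fun f _ => ?_
        rw [Finset.sum_mul]
        exact Finset.sum_congr rfl fun e'' _ => (mul_assoc _ _ _).symm
    _ = ∑ f ∈ F, (if f = e then g f else 0) := by
        refine Finset.sum_congr rfl fun f _ => ?_
        by_cases hfe : f = e
        · rw [if_pos hfe, ← hδ f, (hinv e f).1 hfe.symm, one_mul]
        · rw [if_neg hfe, ← hδ f, (hinv e f).2 (fun h => hfe h.symm), zero_mul]
    _ = g e := by rw [Finset.sum_ite_eq' F e g, if_pos heF]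

end Auxiliary

/-- abstract change-of-basis lemma: if `c : E' × E → ℂ` vanishes
whenever `w'(e') ≠ w(e)`, has at most `K` nonzero entries in each row, and has bounded
entries, then `Φ_c` is a well-defined continuous linear map `𝒮(E,V) → 𝒮(E',V)`;
if moreover `c' : E × E' → ℂ` satisfies the same conditions and `c`, `c'` are mutually
inverse matrices, then `Φ_c` is an isomorphism of topological vector spaces with
inverse `Φ_{c'}`. -/
theorem schwartzFam_changeOfBasis
    (n : ℕ) (E E' : Type) [Countable E] [Countable E']
    (w : E → ℝ≥0) (w' : E' → ℝ≥0) (c : E' → E → ℂ)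
    (hzero : ∀ (e' : E') (e : E), c e' e ≠ 0 → w' e' = w e)
    (hrow : ∃ K : ℕ, ∀ e' : E', ∃ s : Finset E, {e : E | c e' e ≠ 0} ⊆ ↑s ∧ s.card ≤ K)
    (hbdd : ∃ B : ℝ, ∀ (e' : E') (e : E), ‖c e' e‖ ≤ B) :
    (∃ T : SchwartzFam n E w →L[ℂ] SchwartzFam n E' w',
        ∀ (φ : SchwartzFam n E w) (e' : E') (x : V n),
          ((T φ : SchwartzFam n E' w') : E' → V n → ℂ) e' x
            = ∑ᶠ e : E, c e' e * (φ : E → V n → ℂ) e x) ∧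
      ∀ c' : E → E' → ℂ,
        (∀ (e : E) (e' : E'), c' e e' ≠ 0 → w e = w' e') →
        (∃ K : ℕ, ∀ e : E, ∃ s : Finset E', {e' : E' | c' e e' ≠ 0} ⊆ ↑s ∧ s.card ≤ K) →
        (∃ B : ℝ, ∀ (e : E) (e' : E'), ‖c' e e'‖ ≤ B) →
        (∀ e' f' : E', (e' = f' → ∑ᶠ e'' : E, c e' e'' * c' e'' f' = 1)
          ∧ (e' ≠ f' → ∑ᶠ e'' : E, c e' e'' * c' e'' f' = 0)) →
        (∀ e f : E, (e = f → ∑ᶠ e'' : E', c' e e'' * c e'' f = 1)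
          ∧ (e ≠ f → ∑ᶠ e'' : E', c' e e'' * c e'' f = 0)) →
        ∃ F : SchwartzFam n E w ≃L[ℂ] SchwartzFam n E' w',
          (∀ (φ : SchwartzFam n E w) (e' : E') (x : V n),
            ((F φ : SchwartzFam n E' w') : E' → V n → ℂ) e' x
              = ∑ᶠ e : E, c e' e * (φ : E → V n → ℂ) e x) ∧
          (∀ (ψ : SchwartzFam n E' w') (e : E) (x : V n),
            ((F.symm ψ : SchwartzFam n E w) : E → V n → ℂ) e x
              = ∑ᶠ e' : E', c' e e' * (ψ : E' → V n → ℂ) e' x) := by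
  classical
  obtain ⟨T, hT⟩ := exists_changeOfBasis_CLM n w w' c hzero hrow hbdd
  refine ⟨⟨T, hT⟩, ?_⟩
  intro c' hzero' hrow' hbdd' hinv₁ hinv₂
  obtain ⟨T', hT'⟩ := exists_changeOfBasis_CLM n w' w c' hzero' hrow' hbdd'
  obtain ⟨K, hK⟩ := hrow
  choose s hs₁ _ using hK
  obtain ⟨K', hK'⟩ := hrow'
  choose s' hs'₁ _ using hK'
  have hleft : Function.LeftInverse T' T := by
    intro φ
    apply Subtype.ext
    funext e x
    have h1 : ((T' (T φ) : SchwartzFam n E w) : E → V n → ℂ) e x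
        = ∑ᶠ e'' : E', c' e e'' * ∑ᶠ f : E, c e'' f * (φ : E → V n → ℂ) f x := by
      rw [hT' (T φ) e x]
      exact finsum_congr fun e'' => by rw [hT φ e'' x]
    rw [h1]
    exact key_inverse c c' s s' hs₁ hs'₁ hinv₂ (fun f => (φ : E → V n → ℂ) f x) e
  have hright : Function.RightInverse T' T := by
    intro ψ
    apply Subtype.ext
    funext e' x
    have h1 : ((T (T' ψ) : SchwartzFam n E' w') : E' → V n → ℂ) e' x
        = ∑ᶠ e'' : E, c e' e'' * ∑ᶠ f' : E', c' e'' f' * (ψ : E' → V n → ℂ) f' x := by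
      rw [hT (T' ψ) e' x]
      exact finsum_congr fun e'' => by rw [hT' ψ e'' x]
    rw [h1]
    exact key_inverse c' c s' s hs'₁ hs₁ hinv₁ (fun f' => (ψ : E' → V n → ℂ) f' x) e'
  refine ⟨ContinuousLinearEquiv.equivOfInverse T T' hleft hright, fun φ e' x => ?_,
    fun ψ e x => ?_⟩
  · rw [show (ContinuousLinearEquiv.equivOfInverse T T' hleft hright) φ = T φ from
      ContinuousLinearEquiv.equivOfInverse_apply T T' hleft hright φ]
    exact hT φ e' x
  · rw [show (ContinuousLinearEquiv.equivOfInverse T T' hleft hright).symm ψ = T' ψ by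
      rw [ContinuousLinearEquiv.symm_equivOfInverse]
      exact ContinuousLinearEquiv.equivOfInverse_apply T' T hright hleft ψ]
    exact hT' ψ e x

end PaperStableTransfer
end
end

section
/- Let n ≥ 1, let A ∈ GL_n(ℤ) be semisimple (diagonalizable over ℂ), and let θ be the automorphism of the complex torus T = (ℂ^×)^n given by θ(t)_i = ∏_{j=1}^n t_j^{A_{ij}}. Let F = {t ∈ T : θ(t) = t} be the fixed-point subgroup and F° its identity connected component (for the standard topology). Then the map F° × T → T sending (t₀, s) to t₀ · s · θ(s)^{−1} is surjective; equivalently, T = F° · (1−θ)T, where (1−θ)T = {s·θ(s)^{−1} : s ∈ T}. (This is the surjectivity assertion, deduced from the Smith normal form, used in the proof of the π₀-finiteness Theorem 5.4 of the paper: for a semisimple automorphism θ′ of a maximal torus 𝒯 of a complex reductive group, the multiplication map 𝒯^{θ′,∘} × (1−θ′)𝒯 → 𝒯 is surjective.) -/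
/-!
# Statement 13

Let `T = (ℂ^×)^n` be the `n`-dimensional complex torus with its standard topology,
`A ∈ GL_n(ℤ)` a semisimple matrix (diagonalizable over `ℂ`), and `θ` the algebraic
automorphism of `T` given by `θ(t)_i = ∏_j t_j^{A_{ij}}`.  Let `F = {t ∈ T : θ(t) = t}`
be the fixed-point subgroup and `F°` its identity connected component.  Then the map
`F° × T → T`, `(t₀, s) ↦ t₀ · s · θ(s)⁻¹`, is surjective; equivalently
`T = F° · (1 − θ)T`.  (This is the surjectivity assertion, deduced from the Smith
normal form, used in the proof of the π₀-finiteness theorem.)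
-/

noncomputable section

namespace PaperStableTransfer

/-- The automorphism of the complex torus `(ℂ^×)^n` induced by an integer matrix `A`:
`θ(t)_i = ∏_j t_j^{A_{ij}}`. -/
def torusAut (n : ℕ) (A : Matrix (Fin n) (Fin n) ℤ) (t : Fin n → ℂˣ) : Fin n → ℂˣ :=
  fun i => ∏ j, t j ^ A i j

/-- Exponential as a map to units. -/
def eu (z : ℂ) : ℂˣ := Units.mk0 (Complex.exp z) (Complex.exp_ne_zero z)

lemma eu_val (z : ℂ) : (eu z : ℂ) = Complex.exp z := rfl

lemma eu_zero : eu 0 = 1 := by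
  ext; simp [eu_val, Complex.exp_zero]

lemma eu_zpow (z : ℂ) (m : ℤ) : eu z ^ m = eu (m * z) := by
  ext
  rw [Units.val_zpow_eq_zpow_val, eu_val, eu_val, Complex.exp_int_mul]

lemma torusAut_eu (n : ℕ) (A : Matrix (Fin n) (Fin n) ℤ) (v : Fin n → ℂ) :
    torusAut n A (fun j => eu (v j)) =
      fun i => eu (((A.map (Int.cast : ℤ → ℂ)).mulVec v) i) := by
  funext i
  simp only [torusAut, eu_zpow]
  ext
  rw [← Units.coeHom_apply, map_prod (Units.coeHom ℂ)]
  simp only [Units.coeHom_apply, eu_val, Matrix.mulVec, dotProduct,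
    Matrix.map_apply, Complex.exp_sum]

/-- for `n ≥ 1` and a semisimple `A ∈ GL_n(ℤ)` inducing the
automorphism `θ` of `T = (ℂ^×)^n`, every `t ∈ T` can be written as
`t = t₀ · s · θ(s)⁻¹` with `t₀` in the identity connected component `F°` of the
fixed-point subgroup `F = {t : θ t = t}` and `s ∈ T`; that is,
`T = F° · (1 − θ)T`. -/
theorem torus_eq_fixedComponent_mul_oneSubAut
    (n : ℕ) (hn : 1 ≤ n) (A : (Matrix (Fin n) (Fin n) ℤ)ˣ)
    (hsemisimple : ∃ P : (Matrix (Fin n) (Fin n) ℂ)ˣ, ∃ d : Fin n → ℂ,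
      (P : Matrix (Fin n) (Fin n) ℂ)
          * ((A : Matrix (Fin n) (Fin n) ℤ).map (Int.cast : ℤ → ℂ))
          * ((P⁻¹ : (Matrix (Fin n) (Fin n) ℂ)ˣ) : Matrix (Fin n) (Fin n) ℂ)
        = Matrix.diagonal d) :
    ∀ t : Fin n → ℂˣ,
      ∃ t₀ ∈ connectedComponentIn
          {s : Fin n → ℂˣ | torusAut n (A : Matrix (Fin n) (Fin n) ℤ) s = s} 1,
        ∃ s : Fin n → ℂˣ,
          t = t₀ * (s * (torusAut n (A : Matrix (Fin n) (Fin n) ℤ) s)⁻¹) := by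
  obtain ⟨P, d, hP⟩ := hsemisimple
  intro t
  set B : Matrix (Fin n) (Fin n) ℂ := (A : Matrix (Fin n) (Fin n) ℤ).map (Int.cast : ℤ → ℂ)
    with hB
  have hB' : B = (P⁻¹ : (Matrix (Fin n) (Fin n) ℂ)ˣ) * Matrix.diagonal d
      * (P : Matrix (Fin n) (Fin n) ℂ) := by
    rw [← hP, mul_assoc, Units.inv_mul_cancel_right, Units.inv_mul_cancel_left]
  set z : Fin n → ℂ := fun i => Complex.log ((t i : ℂ)) with hz
  have ht : ∀ i, t i = eu (z i) := by
    intro i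
    ext
    rw [eu_val, hz, Complex.exp_log (t i).ne_zero]
  set y : Fin n → ℂ := (P : Matrix (Fin n) (Fin n) ℂ).mulVec z with hy
  set y₁ : Fin n → ℂ := fun i => if d i = 1 then y i else 0 with hy₁
  set w' : Fin n → ℂ := fun i => if d i = 1 then 0 else y i / (1 - d i) with hw'
  set z₁ : Fin n → ℂ :=
    ((P⁻¹ : (Matrix (Fin n) (Fin n) ℂ)ˣ) : Matrix (Fin n) (Fin n) ℂ).mulVec y₁ with hz₁
  set w : Fin n → ℂ :=
    ((P⁻¹ : (Matrix (Fin n) (Fin n) ℂ)ˣ) : Matrix (Fin n) (Fin n) ℂ).mulVec w' with hw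
  have hPPinv : ∀ v : Fin n → ℂ,
      (P : Matrix (Fin n) (Fin n) ℂ).mulVec
        (((P⁻¹ : (Matrix (Fin n) (Fin n) ℂ)ˣ) : Matrix (Fin n) (Fin n) ℂ).mulVec v) = v := by
    intro v
    rw [Matrix.mulVec_mulVec, ← Units.val_mul, mul_inv_cancel]
    simp [Matrix.one_mulVec]
  have hDy₁ : (Matrix.diagonal d).mulVec y₁ = y₁ := by
    funext i
    rw [Matrix.mulVec_diagonal]
    by_cases h : d i = 1 <;> simp [hy₁, h]
  have hfix : B.mulVec z₁ = z₁ := by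
    rw [hB', hz₁, ← Matrix.mulVec_mulVec, hPPinv, ← Matrix.mulVec_mulVec, hDy₁]
  have hdecomp : z = z₁ + (w - B.mulVec w) := by
    have h1 : w' - (Matrix.diagonal d).mulVec w' = y - y₁ := by
      funext i
      simp only [Pi.sub_apply, Matrix.mulVec_diagonal]
      by_cases h : d i = 1
      · simp [hw', hy₁, h]
      · have hne : (1 : ℂ) - d i ≠ 0 := sub_ne_zero.mpr (Ne.symm h)
        simp only [hw', hy₁, if_neg h]
        have h2 : y i / (1 - d i) - d i * (y i / (1 - d i))
            = (1 - d i) * (y i / (1 - d i)) := by ring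
        rw [h2, mul_comm, div_mul_cancel₀ _ hne, sub_zero]
    have h2 : B.mulVec w = ((P⁻¹ : (Matrix (Fin n) (Fin n) ℂ)ˣ) :
        Matrix (Fin n) (Fin n) ℂ).mulVec ((Matrix.diagonal d).mulVec w') := by
      rw [hB', hw, ← Matrix.mulVec_mulVec, hPPinv, ← Matrix.mulVec_mulVec]
    have h3 : ((P⁻¹ : (Matrix (Fin n) (Fin n) ℂ)ˣ) : Matrix (Fin n) (Fin n) ℂ).mulVec y
        = z := by
      rw [hy, Matrix.mulVec_mulVec, ← Units.val_mul, inv_mul_cancel]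
      simp [Matrix.one_mulVec]
    rw [h2, hw, ← Matrix.mulVec_sub, h1, Matrix.mulVec_sub, h3, hz₁]
    funext i
    simp only [Pi.add_apply, Pi.sub_apply]
    ring
  set f : ℂ → (Fin n → ℂˣ) := fun c => fun i => eu (c * z₁ i) with hf
  have hcont : Continuous f := by
    apply continuous_pi
    intro i
    rw [Units.continuous_iff]
    constructor
    · exact Complex.continuous_exp.comp (continuous_id.mul continuous_const)
    · have hthis : (fun c => (((f c i)⁻¹ : ℂˣ) : ℂ)) = fun c => Complex.exp (-(c * z₁ i)) := by
        funext c
        simp [hf, eu, Complex.exp_neg]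
      rw [hthis]
      exact Complex.continuous_exp.comp ((continuous_id.mul continuous_const).neg)
  have hrange : Set.range f ⊆
      {s : Fin n → ℂˣ | torusAut n (A : Matrix (Fin n) (Fin n) ℤ) s = s} := by
    rintro _ ⟨c, rfl⟩
    show torusAut n (A : Matrix (Fin n) (Fin n) ℤ) (fun i => eu (c * z₁ i)) = _
    have harg : (fun i => eu (c * z₁ i)) = fun j => eu ((c • z₁) j) := by
      funext j; simp [smul_eq_mul]
    rw [harg, torusAut_eu, ← hB, Matrix.mulVec_smul, hfix]
    funext i
    simp [hf, smul_eq_mul]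
  have hf0 : f 0 = 1 := by
    funext i
    simp [hf, eu_zero]
  have ht₀mem : f 1 ∈ connectedComponentIn
      {s : Fin n → ℂˣ | torusAut n (A : Matrix (Fin n) (Fin n) ℤ) s = s} 1 := by
    have hpre : IsPreconnected (Set.range f) := by
      rw [← Set.image_univ]
      exact isPreconnected_univ.image f hcont.continuousOn
    exact hpre.subset_connectedComponentIn ⟨0, hf0⟩ hrange ⟨1, rfl⟩
  refine ⟨f 1, ht₀mem, fun j => eu (w j), ?_⟩
  funext i
  have hθ := congrFun (torusAut_eu n (A : Matrix (Fin n) (Fin n) ℤ) w) i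
  ext
  rw [ht i]
  simp only [Pi.mul_apply, Pi.inv_apply, Units.val_mul, hθ, hf]
  rw [Units.val_inv_eq_inv_val]
  simp only [eu_val, one_mul]
  rw [← Complex.exp_neg, ← Complex.exp_add, ← Complex.exp_add]
  congr 1
  have hdi := congrFun hdecomp i
  simp only [Pi.add_apply, Pi.sub_apply] at hdi
  rw [hdi, ← hB]
  ring

end PaperStableTransfer
end
end
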